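/- For β ∈ (0,1) define f(ζ;β) := ζ + (8/π)·tan²(πβ/2)·sinh(πζ/2)/( cos(πβ/2) + cosh(πζ/2) ), κ(β) := −(1/2)·sin³(πβ/2)·sec(πβ/2), and γ(β) := −8·sin(πβ/2)·sec³(πβ/2). Then: (i) ∂_ζ f(iβ;β) ≠ 0 and ∂_ζ²f(iβ;β)/∂_ζ f(iβ;β) = πi·κ(β); (ii) cos(πβ) − κ(β)·sin(πβ) = cos⁴(πβ/2) > 0 and γ(β) = −4·sin(πβ)/( cos(πβ) − κ(β)·sin(πβ) ); (iii) f(iβ;β) is purely imaginary with Im f(iβ;β) = β + (4/π)·tan³(πβ/2). -/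

import Mathlib

open Set

/-- The conformal map of the explicit zero-gravity solitary wave of
Crowdy–Nelson–Krishnamurthy. -/
noncomputable def fCNK (β : ℝ) (z : ℂ) : ℂ :=
  z + ((8 / Real.pi * Real.tan (Real.pi * β / 2) ^ 2 : ℝ) : ℂ) *
    Complex.sinh ((Real.pi : ℂ) * z / 2) /
      (((Real.cos (Real.pi * β / 2) : ℝ) : ℂ) + Complex.cosh ((Real.pi : ℂ) * z / 2))

/-- The parameter `κ(β)` of the explicit zero-gravity solitary wave. -/
noncomputable def kappaCNK (β : ℝ) : ℝ :=
  -(1 / 2) * Real.sin (Real.pi * β / 2) ^ 3 / Real.cos (Real.pi * β / 2)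

/-- The circulation of the explicit zero-gravity solitary wave. -/
noncomputable def gammaCNK (β : ℝ) : ℝ :=
  -8 * Real.sin (Real.pi * β / 2) / Real.cos (Real.pi * β / 2) ^ 3

/-- The derivative of `fCNK β` at any point where the denominator does not vanish. -/
lemma fCNK_hasDerivAt (β : ℝ) (z : ℂ)
    (hz : ((Real.cos (Real.pi * β / 2) : ℝ) : ℂ) + Complex.cosh ((Real.pi:ℂ)*z/2) ≠ 0) :
    HasDerivAt (fCNK β)
      (1 + ((8 / Real.pi * Real.tan (Real.pi * β / 2) ^ 2 : ℝ) : ℂ) * ((Real.pi:ℂ)/2) *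
        (((Real.cos (Real.pi * β / 2) : ℝ) : ℂ) * Complex.cosh ((Real.pi:ℂ)*z/2) + 1) /
          (((Real.cos (Real.pi * β / 2) : ℝ) : ℂ) + Complex.cosh ((Real.pi:ℂ)*z/2))^2) z := by
  set A : ℂ := ((8 / Real.pi * Real.tan (Real.pi * β / 2) ^ 2 : ℝ) : ℂ)
  set C : ℂ := ((Real.cos (Real.pi * β / 2) : ℝ) : ℂ)
  have h1 : HasDerivAt (fun z : ℂ => (Real.pi:ℂ)*z/2) ((Real.pi:ℂ)/2) z := by
    simpa using ((hasDerivAt_id z).const_mul (Real.pi:ℂ)).div_const 2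
  have hs : HasDerivAt (fun z : ℂ => Complex.sinh ((Real.pi:ℂ)*z/2))
      (Complex.cosh ((Real.pi:ℂ)*z/2) * ((Real.pi:ℂ)/2)) z :=
    (Complex.hasDerivAt_sinh _).comp z h1
  have hc : HasDerivAt (fun z : ℂ => C + Complex.cosh ((Real.pi:ℂ)*z/2))
      (Complex.sinh ((Real.pi:ℂ)*z/2) * ((Real.pi:ℂ)/2)) z :=
    ((Complex.hasDerivAt_cosh _).comp z h1).const_add C
  have hq := (hasDerivAt_id z).add ((hs.const_mul A).div hc hz)
  have h2 := Complex.cosh_sq_sub_sinh_sq ((Real.pi:ℂ)*z/2)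
  have e : (A * (Complex.cosh ((Real.pi:ℂ)*z/2) * ((Real.pi:ℂ)/2)) *
        (C + Complex.cosh ((Real.pi:ℂ)*z/2)) -
      A * Complex.sinh ((Real.pi:ℂ)*z/2) * (Complex.sinh ((Real.pi:ℂ)*z/2) * ((Real.pi:ℂ)/2)))
      = A * ((Real.pi:ℂ)/2) * (C * Complex.cosh ((Real.pi:ℂ)*z/2) + 1) := by
    linear_combination (A * ((Real.pi:ℂ)/2)) * h2
  rw [← e]
  exact hq

/-- Auxiliary algebraic identity used for the second derivative computation. -/
lemma auxCNK2 (p s c i : ℂ) (hp : p ≠ 0) (hc : c ≠ 0) (h2c : c + c ≠ 0) :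
    (8/p*s^2/c^2*(p/2)*(c*(s*i*(p/2)))*(c+c)^2
      - 8/p*s^2/c^2*(p/2)*(c*c+1)*(2*(c+c)^1*(s*i*(p/2))))/((c+c)^2)^2 / (1/c^4)
    = p*i*(-(1/2)*s^3/c) := by
  rw [div_div_eq_mul_div, div_one, div_mul_eq_mul_div,
    show p*i*(-(1/2)*s^3/c) = (p*i*(-(1/2)*s^3))/c from by ring,
    div_eq_div_iff (pow_ne_zero 2 (pow_ne_zero 2 h2c)) hc]
  field_simp [hp, hc]
  ring

theorem statement16 (β : ℝ) (hβ : β ∈ Ioo (0 : ℝ) 1) :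
    -- (i) the Helmholtz–Kirchhoff condition
    (deriv (fCNK β) (Complex.I * β) ≠ 0
      ∧ deriv (deriv (fCNK β)) (Complex.I * β) / deriv (fCNK β) (Complex.I * β) =
          (Real.pi : ℂ) * Complex.I * kappaCNK β)
    -- (ii) the circulation identity
    ∧ (Real.cos (Real.pi * β) - kappaCNK β * Real.sin (Real.pi * β) =
        Real.cos (Real.pi * β / 2) ^ 4
      ∧ 0 < Real.cos (Real.pi * β / 2) ^ 4
      ∧ gammaCNK β = -4 * Real.sin (Real.pi * β) /
          (Real.cos (Real.pi * β) - kappaCNK β * Real.sin (Real.pi * β)))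
    -- (iii) the physical altitude of the vortex
    ∧ ((fCNK β (Complex.I * β)).re = 0
      ∧ (fCNK β (Complex.I * β)).im = β + 4 / Real.pi * Real.tan (Real.pi * β / 2) ^ 3) := by
  obtain ⟨hβ0, hβ1⟩ := hβ
  have hπ := Real.pi_pos
  have hπ0 : Real.pi ≠ 0 := ne_of_gt hπ
  have hπC : (Real.pi:ℂ) ≠ 0 := by exact_mod_cast hπ0
  set s : ℝ := Real.sin (Real.pi * β / 2) with hsdef
  set c : ℝ := Real.cos (Real.pi * β / 2) with hcdef
  have hcpos : 0 < c := by
    rw [hcdef]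
    apply Real.cos_pos_of_mem_Ioo
    constructor <;> nlinarith
  have hc0 : c ≠ 0 := ne_of_gt hcpos
  have hcC : (c:ℂ) ≠ 0 := by exact_mod_cast hc0
  have hsc : s^2 + c^2 = 1 := Real.sin_sq_add_cos_sq _
  have hscC : (s:ℂ)^2 + (c:ℂ)^2 = 1 := by exact_mod_cast hsc
  have htan : Real.tan (Real.pi * β / 2) = s / c := Real.tan_eq_sin_div_cos _
  -- complex values at z₀ = Iβ
  have hw : (Real.pi:ℂ) * (Complex.I * (β:ℂ)) / 2 = ((Real.pi * β / 2 : ℝ) : ℂ) * Complex.I := by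
    push_cast; ring
  have hcosh0 : Complex.cosh ((Real.pi:ℂ) * (Complex.I * (β:ℂ)) / 2) = (c:ℂ) := by
    rw [hw, Complex.cosh_mul_I, ← Complex.ofReal_cos, ← hcdef]
  have hsinh0 : Complex.sinh ((Real.pi:ℂ) * (Complex.I * (β:ℂ)) / 2) = (s:ℂ) * Complex.I := by
    rw [hw, Complex.sinh_mul_I, ← Complex.ofReal_sin, ← hsdef]
  have hz0 : ((Real.cos (Real.pi * β / 2) : ℝ) : ℂ)
      + Complex.cosh ((Real.pi:ℂ) * (Complex.I * (β:ℂ)) / 2) ≠ 0 := by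
    rw [hcosh0, ← hcdef, ← Complex.ofReal_add, Complex.ofReal_ne_zero]
    positivity
  have hA : ((8 / Real.pi * Real.tan (Real.pi * β / 2) ^ 2 : ℝ) : ℂ)
      = 8 / (Real.pi:ℂ) * (s:ℂ)^2 / (c:ℂ)^2 := by
    rw [htan]; push_cast; field_simp
  -- first derivative value
  have hd1 := fCNK_hasDerivAt β (Complex.I * (β:ℂ)) hz0
  have hs2 : (s:ℂ)^2 = 1 - (c:ℂ)^2 := by linear_combination hscC
  have h2c : ((c:ℂ) + (c:ℂ)) ≠ 0 := by rw [← two_mul]; exact mul_ne_zero two_ne_zero hcC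
  have hf' : deriv (fCNK β) (Complex.I * (β:ℂ)) = 1 / (c:ℂ)^4 := by
    rw [hd1.deriv, hcosh0, hA, ← hcdef]
    have e : 8/(Real.pi:ℂ) * (s:ℂ)^2/(c:ℂ)^2 * ((Real.pi:ℂ)/2) * ((c:ℂ)*(c:ℂ)+1)/((c:ℂ)+(c:ℂ))^2
        = (s:ℂ)^2*((c:ℂ)^2+1)/(c:ℂ)^4 := by
      rw [div_eq_div_iff (pow_ne_zero 2 h2c) (pow_ne_zero 4 hcC)]
      field_simp [hπC, hcC]
      ring
    rw [e, hs2, eq_div_iff (pow_ne_zero 4 hcC), add_mul,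
      div_mul_cancel₀ _ (pow_ne_zero 4 hcC)]
    ring
  have hf'ne : deriv (fCNK β) (Complex.I * (β:ℂ)) ≠ 0 := by
    rw [hf']; exact one_div_ne_zero (pow_ne_zero 4 hcC)
  -- part (ii)
  have h2b : Real.pi * β = 2 * (Real.pi * β / 2) := by ring
  have hcos2 : Real.cos (Real.pi * β) = 2*c^2 - 1 := by
    rw [h2b, Real.cos_two_mul, ← hcdef]
  have hsin2 : Real.sin (Real.pi * β) = 2*s*c := by
    rw [h2b, Real.sin_two_mul, ← hsdef, ← hcdef]
  have hKr : kappaCNK β = -(1/2)*s^3/c := by rw [kappaCNK, ← hsdef, ← hcdef]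
  have hii1 : Real.cos (Real.pi * β) - kappaCNK β * Real.sin (Real.pi * β) = c^4 := by
    rw [hcos2, hsin2, hKr]
    field_simp
    linear_combination (s^2 + 1 - c^2) * hsc
  have hii3 : gammaCNK β = -4 * Real.sin (Real.pi * β) /
      (Real.cos (Real.pi * β) - kappaCNK β * Real.sin (Real.pi * β)) := by
    rw [hii1, gammaCNK, ← hsdef, ← hcdef, hsin2,
      div_eq_div_iff (pow_ne_zero 3 hc0) (pow_ne_zero 4 hc0)]
    ring
  -- part (iii)
  have hval : fCNK β (Complex.I * (β:ℂ))
      = (((β + 4/Real.pi * Real.tan (Real.pi * β / 2)^3 : ℝ)):ℂ) * Complex.I := by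
    simp only [fCNK]
    rw [hcosh0, hsinh0, htan, ← hcdef]
    push_cast
    field_simp
    ring
  -- second derivative
  set A : ℂ := ((8 / Real.pi * Real.tan (Real.pi * β / 2) ^ 2 : ℝ) : ℂ) with hAdef
  set C : ℂ := ((Real.cos (Real.pi * β / 2) : ℝ) : ℂ) with hCdef
  set g1 : ℂ → ℂ := fun z => 1 + A * ((Real.pi:ℂ)/2) *
      (C * Complex.cosh ((Real.pi:ℂ)*z/2) + 1) /
        (C + Complex.cosh ((Real.pi:ℂ)*z/2))^2 with hg1def
  have hUopen : IsOpen {z : ℂ | C + Complex.cosh ((Real.pi:ℂ)*z/2) ≠ 0} := by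
    have hcont : Continuous fun z : ℂ => C + Complex.cosh ((Real.pi:ℂ)*z/2) := by fun_prop
    exact isOpen_compl_singleton.preimage hcont
  have hev : deriv (fCNK β) =ᶠ[nhds (Complex.I * (β:ℂ))] g1 := by
    filter_upwards [hUopen.mem_nhds hz0] with z hz
    exact (fCNK_hasDerivAt β z hz).deriv
  have hderiv2 : deriv (deriv (fCNK β)) (Complex.I * (β:ℂ)) = deriv g1 (Complex.I * (β:ℂ)) :=
    hev.deriv_eq
  have h1' : HasDerivAt (fun z : ℂ => (Real.pi:ℂ)*z/2) ((Real.pi:ℂ)/2) (Complex.I * (β:ℂ)) := by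
    simpa using ((hasDerivAt_id (Complex.I * (β:ℂ))).const_mul (Real.pi:ℂ)).div_const 2
  have hcoshD : HasDerivAt (fun z : ℂ => Complex.cosh ((Real.pi:ℂ)*z/2))
      (Complex.sinh ((Real.pi:ℂ)*(Complex.I * (β:ℂ))/2) * ((Real.pi:ℂ)/2)) (Complex.I * (β:ℂ)) :=
    (Complex.hasDerivAt_cosh _).comp _ h1'
  have hN : HasDerivAt (fun z : ℂ => C * Complex.cosh ((Real.pi:ℂ)*z/2) + 1)
      (C * (Complex.sinh ((Real.pi:ℂ)*(Complex.I * (β:ℂ))/2) * ((Real.pi:ℂ)/2)))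
      (Complex.I * (β:ℂ)) :=
    (hcoshD.const_mul C).add_const 1
  have hD : HasDerivAt (fun z : ℂ => (C + Complex.cosh ((Real.pi:ℂ)*z/2))^2)
      (2 * (C + Complex.cosh ((Real.pi:ℂ)*(Complex.I * (β:ℂ))/2)) ^ 1 *
        (Complex.sinh ((Real.pi:ℂ)*(Complex.I * (β:ℂ))/2) * ((Real.pi:ℂ)/2)))
      (Complex.I * (β:ℂ)) := by
    simpa using (hcoshD.const_add C).fun_pow 2
  have hD0 : (C + Complex.cosh ((Real.pi:ℂ)*(Complex.I * (β:ℂ))/2))^2 ≠ 0 :=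
    pow_ne_zero 2 hz0
  have hg : HasDerivAt g1
      ((A * ((Real.pi:ℂ)/2) *
          (C * (Complex.sinh ((Real.pi:ℂ)*(Complex.I * (β:ℂ))/2) * ((Real.pi:ℂ)/2))) *
          (C + Complex.cosh ((Real.pi:ℂ)*(Complex.I * (β:ℂ))/2))^2 -
        A * ((Real.pi:ℂ)/2) * (C * Complex.cosh ((Real.pi:ℂ)*(Complex.I * (β:ℂ))/2) + 1) *
          (2 * (C + Complex.cosh ((Real.pi:ℂ)*(Complex.I * (β:ℂ))/2)) ^ 1 *
            (Complex.sinh ((Real.pi:ℂ)*(Complex.I * (β:ℂ))/2) * ((Real.pi:ℂ)/2)))) /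
        ((C + Complex.cosh ((Real.pi:ℂ)*(Complex.I * (β:ℂ))/2))^2)^2)
      (Complex.I * (β:ℂ)) :=
    ((hN.const_mul (A * ((Real.pi:ℂ)/2))).div hD hD0).const_add 1
  have hκ : ((kappaCNK β : ℝ) : ℂ) = -(1/2) * (s:ℂ)^3 / (c:ℂ) := by
    rw [kappaCNK, ← hsdef, ← hcdef]; push_cast; ring
  have hgoal1 : deriv (deriv (fCNK β)) (Complex.I * (β:ℂ)) /
      deriv (fCNK β) (Complex.I * (β:ℂ)) =
      (Real.pi : ℂ) * Complex.I * ((kappaCNK β : ℝ) : ℂ) := by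
    rw [hderiv2, hg.deriv, hf', hκ, hcosh0, hsinh0, hA, hCdef, ← hcdef]
    exact auxCNK2 (Real.pi:ℂ) (s:ℂ) (c:ℂ) Complex.I hπC hcC h2c
  refine ⟨⟨hf'ne, hgoal1⟩, ⟨hii1, pow_pos hcpos 4, hii3⟩, ?_, ?_⟩
  · rw [hval, Complex.mul_re]
    simp only [Complex.ofReal_re, Complex.ofReal_im, Complex.I_re, Complex.I_im]
    ring
  · rw [hval, Complex.mul_im]
    simp only [Complex.ofReal_re, Complex.ofReal_im, Complex.I_re, Complex.I_im]
    ring
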